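/- Define g : (9,∞) → ℝ by g(x) = 2/(3x) − 1/(12(x−1)) + 5/(12(x+1)) − ln(1 + 1/x) − (1/(12(x+1)³) + 13/(120(x+1)⁴)) + (1/(12x³) + 13/(120x⁴)). Then g is strictly decreasing on (9,∞). -/

import Mathlib

noncomputable def g (x : ℝ) : ℝ :=
  2 / (3 * x) - 1 / (12 * (x - 1)) + 5 / (12 * (x + 1)) - Real.log (1 + 1 / x)
    - (1 / (12 * (x + 1) ^ 3) + 13 / (120 * (x + 1) ^ 4))
    + (1 / (12 * x ^ 3) + 13 / (120 * x ^ 4))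

noncomputable def g' (x : ℝ) : ℝ :=
  -2 / (3 * x ^ 2) + 1 / (12 * (x - 1) ^ 2) - 5 / (12 * (x + 1) ^ 2)
    - (1 / (x + 1) - 1 / x)
    + (1 / (4 * (x + 1) ^ 4) + 13 / (30 * (x + 1) ^ 5))
    - (1 / (4 * x ^ 4) + 13 / (30 * x ^ 5))

lemma hasDerivAt_g {x : ℝ} (hx : 9 < x) : HasDerivAt g (g' x) x := by
  have hx0 : x ≠ 0 := by linarith
  have hx0' : (0:ℝ) < x := by linarith
  have hxm : x - 1 ≠ 0 := by intro h; nlinarith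
  have hxp : x + 1 ≠ 0 := by intro h; nlinarith
  have hxp' : (0:ℝ) < x + 1 := by linarith
  have hlog : (1 : ℝ) + 1 / x ≠ 0 := by positivity
  -- building blocks
  have hid : HasDerivAt (fun y : ℝ => y) 1 x := hasDerivAt_id x
  have h1 : HasDerivAt (fun y : ℝ => 2 / (3 * y)) (-2 / (3 * x ^ 2)) x := by
    have hd : HasDerivAt (fun y : ℝ => 3 * y) 3 x := by simpa using hid.const_mul 3
    have := (hasDerivAt_const x (2:ℝ)).div hd (by simpa using hx0)
    refine this.congr_deriv ?_
    field_simp; ring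
  have h2 : HasDerivAt (fun y : ℝ => 1 / (12 * (y - 1))) (-1 / (12 * (x - 1) ^ 2)) x := by
    have hd : HasDerivAt (fun y : ℝ => 12 * (y - 1)) 12 x := by
      simpa using (hid.sub_const 1).const_mul 12
    have := (hasDerivAt_const x (1:ℝ)).div hd (by simpa using hxm)
    refine this.congr_deriv ?_
    field_simp; ring
  have h3 : HasDerivAt (fun y : ℝ => 5 / (12 * (y + 1))) (-5 / (12 * (x + 1) ^ 2)) x := by
    have hd : HasDerivAt (fun y : ℝ => 12 * (y + 1)) 12 x := by
      simpa using (hid.add_const 1).const_mul 12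
    have := (hasDerivAt_const x (5:ℝ)).div hd (by simpa using hxp)
    refine this.congr_deriv ?_
    field_simp; ring
  have h4 : HasDerivAt (fun y : ℝ => Real.log (1 + 1 / y)) (1 / (x + 1) - 1 / x) x := by
    have hin : HasDerivAt (fun y : ℝ => 1 + 1 / y) (-(x ^ 2)⁻¹) x := by
      simpa [one_div] using (hasDerivAt_inv hx0).const_add 1
    have := hin.log hlog
    refine this.congr_deriv ?_
    field_simp; ring
  have hcube : HasDerivAt (fun y : ℝ => 12 * (y + 1) ^ 3) (36 * (x + 1) ^ 2) x := by
    have := ((hid.add_const 1).pow 3).const_mul 12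
    refine this.congr_deriv ?_; ring
  have h5 : HasDerivAt (fun y : ℝ => 1 / (12 * (y + 1) ^ 3)) (-1 / (4 * (x + 1) ^ 4)) x := by
    have := (hasDerivAt_const x (1:ℝ)).div hcube (by positivity)
    refine this.congr_deriv ?_
    field_simp; ring
  have hfour : HasDerivAt (fun y : ℝ => 120 * (y + 1) ^ 4) (480 * (x + 1) ^ 3) x := by
    have := ((hid.add_const 1).pow 4).const_mul 120
    refine this.congr_deriv ?_; ring
  have h6 : HasDerivAt (fun y : ℝ => 13 / (120 * (y + 1) ^ 4)) (-13 / (30 * (x + 1) ^ 5)) x := by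
    have := (hasDerivAt_const x (13:ℝ)).div hfour (by positivity)
    refine this.congr_deriv ?_
    field_simp; ring
  have hcx : HasDerivAt (fun y : ℝ => 12 * y ^ 3) (36 * x ^ 2) x := by
    have := (hid.pow 3).const_mul 12
    refine this.congr_deriv ?_; ring
  have h7 : HasDerivAt (fun y : ℝ => 1 / (12 * y ^ 3)) (-1 / (4 * x ^ 4)) x := by
    have := (hasDerivAt_const x (1:ℝ)).div hcx (by positivity)
    refine this.congr_deriv ?_
    field_simp; ring
  have hfx : HasDerivAt (fun y : ℝ => 120 * y ^ 4) (480 * x ^ 3) x := by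
    have := (hid.pow 4).const_mul 120
    refine this.congr_deriv ?_; ring
  have h8 : HasDerivAt (fun y : ℝ => 13 / (120 * y ^ 4)) (-13 / (30 * x ^ 5)) x := by
    have := (hasDerivAt_const x (13:ℝ)).div hfx (by positivity)
    refine this.congr_deriv ?_
    field_simp; ring
  have H := ((((h1.sub h2).add h3).sub h4).sub (h5.add h6)).add (h7.add h8)
  have Heq : g = fun y : ℝ =>
      2 / (3 * y) - 1 / (12 * (y - 1)) + 5 / (12 * (y + 1)) - Real.log (1 + 1 / y)
        - (1 / (12 * (y + 1) ^ 3) + 13 / (120 * (y + 1) ^ 4))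
        + (1 / (12 * y ^ 3) + 13 / (120 * y ^ 4)) := rfl
  rw [Heq]
  refine H.congr_deriv ?_
  unfold g'
  ring

lemma g'_neg {x : ℝ} (hx : 9 < x) : g' x < 0 := by
  have hx0 : (0:ℝ) < x := by linarith
  have hxm : (0:ℝ) < x - 1 := by linarith
  have hxp : (0:ℝ) < x + 1 := by linarith
  have ht : (0:ℝ) < x - 9 := by linarith
  have key : g' x = -((772064 + 1725456*(x-9) + 802376*(x-9)^2 + 164805*(x-9)^3
      + 17405*(x-9)^4 + 930*(x-9)^5 + 20*(x-9)^6)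
      / (60 * x^5 * (x-1)^2 * (x+1)^5)) := by
    have h1 : x ≠ 0 := ne_of_gt hx0
    have h2 : x - 1 ≠ 0 := ne_of_gt hxm
    have h3 : x + 1 ≠ 0 := ne_of_gt hxp
    unfold g'
    field_simp
    ring
  rw [key, neg_lt, neg_zero]
  positivity

theorem g_strictAntiOn : StrictAntiOn g (Set.Ioi (9 : ℝ)) := by
  have hconv : Convex ℝ (Set.Ioi (9:ℝ)) := convex_Ioi 9
  apply StrictAntiOn.mono (s := Set.Ioi (9:ℝ)) ?_ le_rfl
  apply strictAntiOn_of_deriv_neg hconv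
  · intro x hx
    exact (hasDerivAt_g hx).continuousAt.continuousWithinAt
  · intro x hx
    rw [interior_Ioi] at hx
    rw [(hasDerivAt_g hx).deriv]
    exact g'_neg hx
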